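/- For n ≥ 3, the automorphism ω of SL_n(k) sending A to (A^t)^{-1} is not induced by conjugation by any element of GL_n(k). -/

import Mathlib

/-- for `n ≥ 3`, the automorphism `A ↦ (Aᵀ)⁻¹` of `SLₙ(k)` is not induced by
conjugation by any element of `GLₙ(k)`. -/
theorem stmt6 (k : Type) [Field k] (n : ℕ) (hn : 3 ≤ n)
    (hk : 2 < Nat.card k ∨ Infinite k) :
    ¬ ∃ g : (Matrix (Fin n) (Fin n) k)ˣ,
        ∀ A : Matrix.SpecialLinearGroup (Fin n) k,
          ((A : Matrix (Fin n) (Fin n) k).transpose)⁻¹ =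
            (g : Matrix (Fin n) (Fin n) k) * (A : Matrix (Fin n) (Fin n) k) *
              ((g⁻¹ : (Matrix (Fin n) (Fin n) k)ˣ) : Matrix (Fin n) (Fin n) k) := by
  rintro ⟨g, hg⟩
  -- For every i ≠ j, g * E_{ij} = - (E_{ji} * g)
  have key : ∀ i j : Fin n, i ≠ j →
      (g : Matrix (Fin n) (Fin n) k) * Matrix.single i j (1 : k)
        = - (Matrix.single j i (1 : k) * (g : Matrix (Fin n) (Fin n) k)) := by
    intro i j hij
    set A : Matrix.SpecialLinearGroup (Fin n) k :=
      ⟨Matrix.transvection i j (1 : k), Matrix.det_transvection_of_ne i j hij 1⟩ with hA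
    have h1 := hg A
    have ht : (A : Matrix (Fin n) (Fin n) k).transpose = Matrix.transvection j i (1 : k) := by
      ext a b
      simp [hA, Matrix.transvection, Matrix.transpose_apply, Matrix.one_apply,
        Matrix.single, Matrix.add_apply, and_comm, eq_comm]
    have hinv : (Matrix.transvection j i (1 : k))⁻¹ = Matrix.transvection j i (-1 : k) := by
      apply Matrix.inv_eq_right_inv
      rw [Matrix.transvection_mul_transvection_same _ _ hij.symm]
      simp
    rw [ht, hinv] at h1
    have h2 : Matrix.transvection j i (-1 : k) * (g : Matrix (Fin n) (Fin n) k)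
        = (g : Matrix (Fin n) (Fin n) k) * Matrix.transvection i j (1 : k) := by
      calc Matrix.transvection j i (-1 : k) * (g : Matrix (Fin n) (Fin n) k)
          = (g : Matrix (Fin n) (Fin n) k) * (A : Matrix (Fin n) (Fin n) k) *
            ((g⁻¹ : (Matrix (Fin n) (Fin n) k)ˣ) : Matrix (Fin n) (Fin n) k) *
            (g : Matrix (Fin n) (Fin n) k) := by rw [← h1]
        _ = (g : Matrix (Fin n) (Fin n) k) * (A : Matrix (Fin n) (Fin n) k) := by
            rw [mul_assoc, Matrix.coe_units_inv,
              Matrix.nonsing_inv_mul _ ((Matrix.isUnit_iff_isUnit_det _).mp g.isUnit), mul_one]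
        _ = (g : Matrix (Fin n) (Fin n) k) * Matrix.transvection i j (1 : k) := rfl
    have h3 : Matrix.single j i (-1 : k) * (g : Matrix (Fin n) (Fin n) k)
        = (g : Matrix (Fin n) (Fin n) k) * Matrix.single i j (1 : k) := by
      have := h2
      simp only [Matrix.transvection, Matrix.add_mul, Matrix.mul_add, Matrix.one_mul,
        Matrix.mul_one] at this
      exact add_left_cancel this
    rw [← h3]
    have : Matrix.single j i (-1 : k) = - Matrix.single j i (1 : k) := by
      ext a b
      simp only [Matrix.single, Matrix.neg_apply, Matrix.of_apply]
      split <;> simp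
    rw [this, neg_mul]
  -- deduce every entry of g is zero
  have hzero : (g : Matrix (Fin n) (Fin n) k) = 0 := by
    ext a i
    have hcard : ({a, i} : Finset (Fin n)).card < Fintype.card (Fin n) := by
      have h1 : ({a, i} : Finset (Fin n)).card ≤ 2 :=
        (Finset.card_insert_le _ _).trans (by simp)
      simp only [Fintype.card_fin]
      omega
    have hpos : 0 < (({a, i} : Finset (Fin n))ᶜ).card := by
      rw [Finset.card_compl]
      omega
    obtain ⟨j, hj⟩ := Finset.card_pos.mp hpos
    rw [Finset.mem_compl] at hj
    simp only [Finset.mem_insert, Finset.mem_singleton, not_or] at hj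
    obtain ⟨hja, hji⟩ := hj
    have hij : i ≠ j := fun h => hji h.symm
    have := congrFun (congrFun (key i j hij) a) j
    simp only [Matrix.zero_apply]
    rw [Matrix.mul_single_apply_same] at this
    rw [Matrix.neg_apply, Matrix.single_mul_apply_of_ne] at this
    · simpa using this
    · exact fun h => hja h.symm
  have hdet : IsUnit ((g : Matrix (Fin n) (Fin n) k).det) :=
    (Matrix.isUnit_iff_isUnit_det _).mp g.isUnit
  rw [hzero] at hdet
  have : Nonempty (Fin n) := ⟨⟨0, by omega⟩⟩
  rw [Matrix.det_zero] at hdet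
  simp at hdet
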